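/- Define Δ₁(g) = Σ_{k≥0} r_k(g), where r_k(g) ∈ {0,1} is the residue mod 2 of t_k(g) (a finite sum). Then Δ₁ is a quasi-homomorphism: Δ₁(gh) ≤ Δ₁(g) + Δ₁(h) + 9 for all g, h ∈ G. -/

import Mathlib

open Monoid Monoid.CoprodI

attribute [local instance] Classical.propDecidable

/-- The list of syllables of the reduced word representing `g`. -/
noncomputable def syllables {ι : Type*} {M : ι → Type*} [∀ i, Group (M i)]
    (g : CoprodI M) : List (Σ i, M i) :=
  letI := Classical.decEq ι
  letI : ∀ i, DecidableEq (M i) := fun _ => Classical.decEq _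
  (Word.equiv g).toList

/-- `g` is a palindrome iff its reduced word reads the same backwards. -/
noncomputable def IsPalindrome {ι : Type*} {M : ι → Type*} [∀ i, Group (M i)]
    (g : CoprodI M) : Prop :=
  (syllables g).reverse = syllables g

/-- `segCount s k g` is the number of `s`-segments of syllable length `2k+1`
in the reduced form of `g`: pairs of consecutive occurrences of the syllable `s`
at distance `2k+2` in the syllable list. -/
noncomputable def segCount {ι : Type*} {M : ι → Type*} [∀ i, Group (M i)]
    (s : Σ i, M i) (k : ℕ) (g : CoprodI M) : ℕ :=
  ((Finset.range (syllables g).length ×ˢ Finset.range (syllables g).length).filter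
    (fun pq => pq.1 < pq.2 ∧ (syllables g)[pq.1]? = some s ∧ (syllables g)[pq.2]? = some s ∧
      (∀ r ∈ Finset.Ioo pq.1 pq.2, (syllables g)[r]? ≠ some s) ∧ pq.2 - pq.1 = 2*k+2)).card

/-- The quasi-homomorphism `Δ₁`: the (finite) sum over `k` of the residue mod 2
of `t_k(g) = d_k(g) - d*_k(g)`. -/
noncomputable def Delta1 {M : Bool → Type*} [∀ b, Group (M b)]
    (a : M true) (g : CoprodI M) : ℕ :=
  ∑ᶠ k : ℕ, if Odd ((segCount ⟨true, a⟩ k g : ℤ) - segCount ⟨true, a⁻¹⟩ k g)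
    then 1 else 0

section ListCount

variable {α : Type*}

/-- Finset of consecutive `s`-pairs at gap `2k+2`. -/
noncomputable def scF (s : α) (k : ℕ) (L : List α) : Finset (ℕ × ℕ) :=
  ((Finset.range L.length ×ˢ Finset.range L.length).filter
    (fun pq => pq.1 < pq.2 ∧ L[pq.1]? = some s ∧ L[pq.2]? = some s ∧
      (∀ r ∈ Finset.Ioo pq.1 pq.2, L[r]? ≠ some s) ∧ pq.2 - pq.1 = 2*k+2))

noncomputable def scL (s : α) (k : ℕ) (L : List α) : ℕ := (scF s k L).card

lemma mem_scF {s : α} {k : ℕ} {L : List α} {pq : ℕ × ℕ} :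
    pq ∈ scF s k L ↔ pq.2 < L.length ∧ pq.1 < pq.2 ∧ L[pq.1]? = some s ∧ L[pq.2]? = some s ∧
      (∀ r, pq.1 < r → r < pq.2 → L[r]? ≠ some s) ∧ pq.2 - pq.1 = 2*k+2 := by
  simp only [scF, Finset.mem_filter, Finset.mem_product, Finset.mem_range, Finset.mem_Ioo,
    and_imp]
  constructor
  · rintro ⟨⟨h1, h2⟩, h3, h4, h5, h6, h7⟩
    exact ⟨h2, h3, h4, h5, h6, h7⟩
  · rintro ⟨h2, h3, h4, h5, h6, h7⟩
    exact ⟨⟨by omega, h2⟩, h3, h4, h5, h6, h7⟩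

lemma scL_eq_zero {s : α} {k : ℕ} {L : List α} (h : L.length ≤ 2*k+2) : scL s k L = 0 := by
  rw [scL, Finset.card_eq_zero]
  ext ⟨p, q⟩
  simp only [mem_scF, Finset.notMem_empty, iff_false, not_and]
  intro h1 h2 h3 h4 h5
  omega

/-- Crossing pairs in `A ++ B`. -/
noncomputable def crossF (s : α) (A B : List α) : Finset (ℕ × ℕ) :=
  ((Finset.range (A++B).length ×ˢ Finset.range (A++B).length).filter
    (fun pq => pq.1 < pq.2 ∧ pq.1 < A.length ∧ A.length ≤ pq.2 ∧
      (A++B)[pq.1]? = some s ∧ (A++B)[pq.2]? = some s ∧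
      (∀ r ∈ Finset.Ioo pq.1 pq.2, (A++B)[r]? ≠ some s)))

lemma mem_crossF {s : α} {A B : List α} {pq : ℕ × ℕ} :
    pq ∈ crossF s A B ↔ pq.2 < (A++B).length ∧ pq.1 < pq.2 ∧ pq.1 < A.length ∧
      A.length ≤ pq.2 ∧ (A++B)[pq.1]? = some s ∧ (A++B)[pq.2]? = some s ∧
      (∀ r, pq.1 < r → r < pq.2 → (A++B)[r]? ≠ some s) := by
  simp only [crossF, Finset.mem_filter, Finset.mem_product, Finset.mem_range, Finset.mem_Ioo,
    and_imp]
  constructor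
  · rintro ⟨⟨h1, h2⟩, h3, h4, h5, h6, h7, h8⟩
    exact ⟨h2, h3, h4, h5, h6, h7, h8⟩
  · rintro ⟨h2, h3, h4, h5, h6, h7, h8⟩
    exact ⟨⟨by omega, h2⟩, h3, h4, h5, h6, h7, h8⟩

lemma card_crossF_le_one (s : α) (A B : List α) : (crossF s A B).card ≤ 1 := by
  rw [Finset.card_le_one]
  rintro ⟨p, q⟩ hpq ⟨p', q'⟩ hpq'
  rw [mem_crossF] at hpq hpq'
  obtain ⟨hq, hlt, hpA, hAq, hocc1, hocc2, hno⟩ := hpq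
  obtain ⟨hq', hlt', hpA', hAq', hocc1', hocc2', hno'⟩ := hpq'
  have hp : p = p' := by
    rcases lt_trichotomy p p' with h | h | h
    · exact absurd hocc1' (hno p' h (by omega))
    · exact h
    · exact absurd hocc1 (hno' p h (by omega))
  subst hp
  have : q = q' := by
    rcases lt_trichotomy q q' with h | h | h
    · exact absurd hocc2 (hno' q (by omega) h)
    · exact h
    · exact absurd hocc2' (hno q' (by omega) h)
  simp [this]

lemma scL_append_eq (s : α) (A B : List α) (k : ℕ) :
    scL s k (A++B) = scL s k A + scL s k B +
      ((crossF s A B).filter (fun pq => pq.2 - pq.1 = 2*k+2)).card := by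
  classical
  set F := scF s k (A++B) with hF
  have e1 : (F.filter (fun pq => pq.2 < A.length)).card
      + (F.filter (fun pq => ¬ pq.2 < A.length)).card = F.card :=
    Finset.card_filter_add_card_filter_not _
  have e2 : ((F.filter (fun pq => ¬ pq.2 < A.length)).filter (fun pq => A.length ≤ pq.1)).card
      + ((F.filter (fun pq => ¬ pq.2 < A.length)).filter (fun pq => ¬ A.length ≤ pq.1)).card
      = (F.filter (fun pq => ¬ pq.2 < A.length)).card :=
    Finset.card_filter_add_card_filter_not _
  -- part 1 : pairs inside A
  have hpart1 : F.filter (fun pq => pq.2 < A.length) = scF s k A := by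
    ext ⟨p, q⟩
    simp only [Finset.mem_filter, hF, mem_scF]
    constructor
    · rintro ⟨⟨hq, hpq, h1, h2, hno, hgap⟩, hqA⟩
      refine ⟨hqA, hpq, ?_, ?_, ?_, hgap⟩
      · rwa [List.getElem?_append_left (by omega)] at h1
      · rwa [List.getElem?_append_left hqA] at h2
      · intro r hr1 hr2
        have := hno r hr1 hr2
        rwa [List.getElem?_append_left (by omega)] at this
    · rintro ⟨hq, hpq, h1, h2, hno, hgap⟩
      refine ⟨⟨by simp [List.length_append]; omega, hpq, ?_, ?_, ?_, hgap⟩, hq⟩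
      · rw [List.getElem?_append_left (by omega)]; exact h1
      · rw [List.getElem?_append_left hq]; exact h2
      · intro r hr1 hr2
        rw [List.getElem?_append_left (by omega)]
        exact hno r hr1 hr2
  -- part 2 : pairs inside B
  have hpart2 : (F.filter (fun pq => ¬ pq.2 < A.length)).filter (fun pq => A.length ≤ pq.1)
      = F.filter (fun pq => A.length ≤ pq.1) := by
    rw [Finset.filter_filter]
    apply Finset.filter_congr
    rintro ⟨p, q⟩ hmem
    rw [hF, mem_scF] at hmem
    constructor
    · rintro ⟨_, h⟩; exact h
    · intro h; exact ⟨by omega, h⟩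
  have hcard2 : (F.filter (fun pq => A.length ≤ pq.1)).card = scL s k B := by
    rw [scL]
    apply Finset.card_bij' (fun pq _ => (pq.1 - A.length, pq.2 - A.length))
      (fun pq _ => (pq.1 + A.length, pq.2 + A.length))
    · rintro ⟨p, q⟩ ha
      simp only [Finset.mem_filter, hF, mem_scF] at ha
      obtain ⟨⟨hq, hpq, h1, h2, hno, hgap⟩, hp⟩ := ha
      rw [mem_scF]
      have hlen : (A++B).length = A.length + B.length := by simp
      refine ⟨by omega, by omega, ?_, ?_, ?_, by omega⟩
      · rwa [List.getElem?_append_right hp] at h1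
      · rwa [List.getElem?_append_right (by omega)] at h2
      · intro r hr1 hr2
        have := hno (r + A.length) (by omega) (by omega)
        rwa [List.getElem?_append_right (by omega), Nat.add_sub_cancel] at this
    · rintro ⟨p, q⟩ ha
      rw [mem_scF] at ha
      obtain ⟨hq, hpq, h1, h2, hno, hgap⟩ := ha
      simp only [Finset.mem_filter, hF, mem_scF]
      have hlen : (A++B).length = A.length + B.length := by simp
      refine ⟨⟨by omega, by omega, ?_, ?_, ?_, by omega⟩, by omega⟩
      · rw [List.getElem?_append_right (by omega), Nat.add_sub_cancel]; exact h1
      · rw [List.getElem?_append_right (by omega), Nat.add_sub_cancel]; exact h2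
      · intro r hr1 hr2
        rw [List.getElem?_append_right (by omega)]
        exact hno (r - A.length) (by omega) (by omega)
    · rintro ⟨p, q⟩ ha
      simp only [Finset.mem_filter, hF, mem_scF] at ha
      obtain ⟨_, hp⟩ := ha
      simp only [Prod.mk.injEq]
      omega
    · rintro ⟨p, q⟩ _
      simp only [Prod.mk.injEq]
      omega
  -- part 3 : crossing pairs
  have hpart3 : (F.filter (fun pq => ¬ pq.2 < A.length)).filter (fun pq => ¬ A.length ≤ pq.1)
      = (crossF s A B).filter (fun pq => pq.2 - pq.1 = 2*k+2) := by
    ext ⟨p, q⟩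
    simp only [Finset.mem_filter, hF, mem_scF, mem_crossF, not_lt, not_le]
    constructor
    · rintro ⟨⟨⟨hq, hpq, h1, h2, hno, hgap⟩, hq2⟩, hp2⟩
      exact ⟨⟨hq, hpq, hp2, hq2, h1, h2, hno⟩, hgap⟩
    · rintro ⟨⟨hq, hpq, hp2, hq2, h1, h2, hno⟩, hgap⟩
      exact ⟨⟨⟨hq, hpq, h1, h2, hno, hgap⟩, hq2⟩, hp2⟩
  rw [scL]
  rw [← e1, ← e2, hpart1, hpart2, hcard2, hpart3]
  rw [show (scF s k A).card = scL s k A from rfl]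
  omega

lemma scL_append_exc (s : α) (A B : List α) :
    ∃ k0, ∀ k, k ≠ k0 → scL s k (A++B) = scL s k A + scL s k B := by
  rcases Finset.eq_empty_or_nonempty (crossF s A B) with hE | ⟨⟨p, q⟩, hpq⟩
  · refine ⟨0, fun k _ => ?_⟩
    rw [scL_append_eq, hE, Finset.filter_empty, Finset.card_empty, add_zero]
  · refine ⟨(q - p - 2)/2, fun k hk => ?_⟩
    rw [scL_append_eq]
    have hempty : (crossF s A B).filter (fun pq => pq.2 - pq.1 = 2*k+2) = ∅ := by
      ext ⟨p', q'⟩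
      simp only [Finset.mem_filter, Finset.notMem_empty, iff_false, not_and]
      intro hmem hgap
      have heq : ((p', q') : ℕ × ℕ) = (p, q) :=
        Finset.card_le_one.mp (card_crossF_le_one s A B) _ hmem _ hpq
      rw [Prod.mk.injEq] at heq
      obtain ⟨h1, h2⟩ := heq
      subst h1; subst h2
      omega
    rw [hempty, Finset.card_empty, add_zero]

lemma scL_single (s x : α) (k : ℕ) : scL s k [x] = 0 := by
  rw [scL, Finset.card_eq_zero]
  ext ⟨p, q⟩
  simp only [mem_scF, Finset.notMem_empty, iff_false, not_and, List.length_singleton]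
  intro h1 h2
  omega

lemma scL_cons {s x : α} (hx : x ≠ s) (B : List α) (k : ℕ) :
    scL s k (x :: B) = scL s k B := by
  have hcross : crossF s [x] B = ∅ := by
    ext ⟨p, q⟩
    simp only [mem_crossF, Finset.notMem_empty, iff_false, not_and, List.length_singleton]
    intro h1 h2 h3 h4 h5 h6 h7
    have hp0 : p = 0 := by omega
    subst hp0
    simp only [List.singleton_append, List.getElem?_cons_zero, Option.some.injEq] at h5
    exact hx h5
  have := scL_append_eq s [x] B k
  rw [hcross, Finset.filter_empty, Finset.card_empty, add_zero, scL_single] at this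
  simpa using this

lemma scL_reverse (s : α) (k : ℕ) (L : List α) : scL s k L.reverse = scL s k L := by
  rw [scL, scL]
  have hlen : L.reverse.length = L.length := List.length_reverse
  apply Finset.card_bij' (fun pq _ => (L.length - 1 - pq.2, L.length - 1 - pq.1))
    (fun pq _ => (L.length - 1 - pq.2, L.length - 1 - pq.1))
  · rintro ⟨p, q⟩ ha
    rw [mem_scF] at ha ⊢
    obtain ⟨hq, hpq, h1, h2, hno, hgap⟩ := ha
    rw [hlen] at hq
    refine ⟨by omega, by omega, ?_, ?_, ?_, by omega⟩
    · rw [← List.getElem?_reverse (by omega : q < L.length)]; exact h2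
    · rw [← List.getElem?_reverse (by omega : p < L.length)]; exact h1
    · intro r hr1 hr2 hcon
      refine hno (L.length - 1 - r) (by omega) (by omega) ?_
      rw [List.getElem?_reverse (by omega : L.length - 1 - r < L.length)]
      have : L.length - 1 - (L.length - 1 - r) = r := by omega
      rw [this]; exact hcon
  · rintro ⟨p, q⟩ ha
    rw [mem_scF] at ha ⊢
    obtain ⟨hq, hpq, h1, h2, hno, hgap⟩ := ha
    rw [hlen]
    refine ⟨by omega, by omega, ?_, ?_, ?_, by omega⟩
    · rw [List.getElem?_reverse (by omega : L.length - 1 - q < L.length)]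
      have : L.length - 1 - (L.length - 1 - q) = q := by omega
      rw [this]; exact h2
    · rw [List.getElem?_reverse (by omega : L.length - 1 - p < L.length)]
      have : L.length - 1 - (L.length - 1 - p) = p := by omega
      rw [this]; exact h1
    · intro r hr1 hr2 hcon
      rw [List.getElem?_reverse (by omega : r < L.length)] at hcon
      exact hno (L.length - 1 - r) (by omega) (by omega) hcon
  · rintro ⟨p, q⟩ ha
    rw [mem_scF] at ha
    obtain ⟨hq, hpq, _⟩ := ha
    rw [hlen] at hq
    simp only [Prod.mk.injEq]
    omega
  · rintro ⟨p, q⟩ ha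
    rw [mem_scF] at ha
    obtain ⟨hq, hpq, _⟩ := ha
    simp only [Prod.mk.injEq]
    omega

lemma scL_map_involutive {β : Type*} (f : α → β) (g : β → α)
    (hfg : ∀ x, g (f x) = x) (hgf : ∀ y, f (g y) = y)
    (s : β) (k : ℕ) (L : List α) : scL s k (L.map f) = scL (g s) k L := by
  have key : ∀ r : ℕ, ((L.map f)[r]? = some s) ↔ (L[r]? = some (g s)) := by
    intro r
    rw [List.getElem?_map]
    cases hL : L[r]? with
    | none => simp
    | some a =>
      simp only [Option.map_some, Option.some.injEq]
      constructor
      · intro h; rw [← h, hfg]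
      · intro h; rw [h, hgf]
  rw [scL, scL]
  congr 1
  ext ⟨p, q⟩
  simp only [mem_scF, List.length_map, ne_eq, key]

end ListCount

section StructureThm

variable {ι : Type*} {M : ι → Type*} [∀ i, Group (M i)]

noncomputable def prodL (L : List (Σ i, M i)) : CoprodI M :=
  (L.map fun l => CoprodI.of l.2).prod

def ReducedL (L : List (Σ i, M i)) : Prop :=
  (∀ l ∈ L, l.2 ≠ 1) ∧ L.Chain' (fun l l' => l.1 ≠ l'.1)

lemma prodL_nil : prodL ([] : List (Σ i, M i)) = 1 := rfl

lemma prodL_append (A B : List (Σ i, M i)) : prodL (A ++ B) = prodL A * prodL B := by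
  simp [prodL]

lemma prodL_cons (x : Σ i, M i) (B : List (Σ i, M i)) :
    prodL (x :: B) = CoprodI.of x.2 * prodL B := by simp [prodL]

lemma prodL_singleton (x : Σ i, M i) : prodL [x] = CoprodI.of x.2 := by simp [prodL]

lemma syllables_prodL {L : List (Σ i, M i)} (h : ReducedL L) :
    syllables (prodL L) = L := by
  letI := Classical.decEq ι
  letI : ∀ i, DecidableEq (M i) := fun _ => Classical.decEq _
  show (Word.equiv (prodL L)).toList = L
  have hw : prodL L = Word.equiv.symm (⟨L, h.1, h.2⟩ : Word M) := rfl
  rw [hw, Equiv.apply_symm_apply]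

lemma prodL_syllables (g : CoprodI M) : prodL (syllables g) = g := by
  letI := Classical.decEq ι
  letI : ∀ i, DecidableEq (M i) := fun _ => Classical.decEq _
  show prodL (Word.equiv g).toList = g
  have : prodL (Word.equiv g).toList = Word.equiv.symm (Word.equiv g) := rfl
  rw [this, Equiv.symm_apply_apply]

lemma reducedL_syllables (g : CoprodI M) : ReducedL (syllables g) := by
  letI := Classical.decEq ι
  letI : ∀ i, DecidableEq (M i) := fun _ => Classical.decEq _
  exact ⟨(Word.equiv g).ne_one, (Word.equiv g).chain_ne⟩

noncomputable def invRev (L : List (Σ i, M i)) : List (Σ i, M i) :=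
  (L.map fun p => ⟨p.1, p.2⁻¹⟩).reverse

lemma invRev_nil : invRev ([] : List (Σ i, M i)) = [] := rfl

lemma invRev_concat (L : List (Σ i, M i)) (x : Σ i, M i) :
    invRev (L ++ [x]) = ⟨x.1, x.2⁻¹⟩ :: invRev L := by simp [invRev]

theorem mul_structure (g h : CoprodI M) :
    ∃ u v m X Y Z : List (Σ i, M i),
      X.length ≤ 1 ∧ Y.length ≤ 1 ∧ Z.length ≤ 1 ∧
      syllables g = u ++ X ++ m ∧
      syllables h = invRev m ++ Y ++ v ∧
      syllables (g * h) = u ++ Z ++ v := by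
  suffices H : ∀ (n : ℕ) (g h : CoprodI M), (syllables g).length ≤ n →
      ∃ u v m X Y Z : List (Σ i, M i),
        X.length ≤ 1 ∧ Y.length ≤ 1 ∧ Z.length ≤ 1 ∧
        syllables g = u ++ X ++ m ∧
        syllables h = invRev m ++ Y ++ v ∧
        syllables (g * h) = u ++ Z ++ v by
    exact H _ g h le_rfl
  intro n
  induction n with
  | zero =>
    intro g h hg
    have hnil : syllables g = [] := List.length_eq_zero_iff.mp (by omega)
    have hg1 : g = 1 := by
      have := prodL_syllables g
      rw [hnil, prodL_nil] at this
      exact this.symm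
    refine ⟨[], syllables h, [], [], [], [], by simp, by simp, by simp, by simp [hnil],
      by simp [invRev_nil], ?_⟩
    rw [hg1, one_mul]; simp
  | succ n ih =>
    intro g h hg
    rcases List.eq_nil_or_concat (syllables g) with hnil | ⟨u₀, x, hgx⟩
    · have hg1 : g = 1 := by
        have := prodL_syllables g
        rw [hnil, prodL_nil] at this
        exact this.symm
      refine ⟨[], syllables h, [], [], [], [], by simp, by simp, by simp, by simp [hnil],
        by simp [invRev_nil], ?_⟩
      rw [hg1, one_mul]; simp
    · rw [List.concat_eq_append] at hgx
      have hredg : ReducedL (u₀ ++ [x]) := hgx ▸ reducedL_syllables g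
      have hredu₀ : ReducedL u₀ :=
        ⟨fun l hl => hredg.1 l (List.mem_append_left _ hl), (List.isChain_append.mp hredg.2).1⟩
      have hjuncg : ∀ l ∈ u₀.getLast?, l.1 ≠ x.1 := by
        intro l hl
        exact (List.isChain_append.mp hredg.2).2.2 l hl x (by simp)
      rcases hh : syllables h with _ | ⟨y, t⟩
      · -- h = 1
        have h1 : h = 1 := by
          have := prodL_syllables h
          rw [hh, prodL_nil] at this
          exact this.symm
        refine ⟨syllables g, [], [], [], [], [], by simp, by simp, by simp, by simp,
          by simp [invRev_nil], ?_⟩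
        rw [h1, mul_one]; simp
      · have hredh : ReducedL (y :: t) := hh ▸ reducedL_syllables h
        have hredt : ReducedL t :=
          ⟨fun l hl => hredh.1 l (List.mem_cons_of_mem _ hl), hredh.2.tail⟩
        have hjunch : ∀ l ∈ t.head?, y.1 ≠ l.1 := (List.isChain_cons.mp hredh.2).1
        have hgeq : g = prodL u₀ * CoprodI.of x.2 := by
          conv_lhs => rw [← prodL_syllables g]
          rw [hgx, prodL_append, prodL_singleton]
        have hheq : h = CoprodI.of y.2 * prodL t := by
          conv_lhs => rw [← prodL_syllables h]
          rw [hh, prodL_cons]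
        by_cases hxy : y.1 = x.1
        · obtain ⟨i, xm⟩ := x
          obtain ⟨j, ym⟩ := y
          simp only at hxy
          subst hxy
          by_cases hunit : xm * ym = 1
          · -- cancellation, recurse
            have hym : ym = xm⁻¹ := eq_inv_of_mul_eq_one_right hunit
            have hsg' : syllables (prodL u₀) = u₀ := syllables_prodL hredu₀
            have hsh' : syllables (prodL t) = t := syllables_prodL hredt
            have hgh2 : g * h = prodL u₀ * prodL t := by
              rw [hgeq, hheq]
              show prodL u₀ * CoprodI.of xm * (CoprodI.of ym * prodL t) = _
              rw [mul_assoc, ← mul_assoc (CoprodI.of xm), ← map_mul, hunit, map_one, one_mul]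
            have hlen : (syllables (prodL u₀)).length ≤ n := by
              rw [hsg']
              have := congrArg List.length hgx
              simp at this
              omega
            obtain ⟨u, v, m, X, Y, Z, hX, hY, hZ, h1, h2, h3⟩ := ih (prodL u₀) (prodL t) hlen
            rw [hsg'] at h1
            rw [hsh'] at h2
            refine ⟨u, v, m ++ [⟨j, xm⟩], X, Y, Z, hX, hY, hZ, ?_, ?_, ?_⟩
            · rw [hgx, h1]; simp
            · rw [invRev_concat, h2, hym]; simp
            · rw [hgh2]; exact h3
          · -- merge
            have hred : ReducedL (u₀ ++ ⟨j, xm * ym⟩ :: t) := by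
              constructor
              · intro l hl
                rcases List.mem_append.mp hl with hl | hl
                · exact hredg.1 l (List.mem_append_left _ hl)
                · rcases List.mem_cons.mp hl with hl | hl
                  · rw [hl]; exact hunit
                  · exact hredh.1 l (List.mem_cons_of_mem _ hl)
              · show List.IsChain _ (_ ++ _); rw [List.isChain_append]
                refine ⟨hredu₀.2, ?_, ?_⟩
                · rw [List.isChain_cons]
                  exact ⟨fun z hz => hjunch z hz, hredt.2⟩
                · intro l hl z hz
                  simp only [List.head?_cons, Option.mem_def, Option.some.injEq] at hz
                  rw [← hz]
                  exact hjuncg l hl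
            have hpr : g * h = prodL (u₀ ++ ⟨j, xm * ym⟩ :: t) := by
              rw [hgeq, hheq, prodL_append, prodL_cons]
              show prodL u₀ * CoprodI.of xm * (CoprodI.of ym * prodL t)
                = prodL u₀ * (CoprodI.of (xm * ym) * prodL t)
              rw [map_mul]
              simp [mul_assoc]
            refine ⟨u₀, t, [], [⟨j, xm⟩], [⟨j, ym⟩], [⟨j, xm * ym⟩], by simp, by simp, by simp,
              by simp [hgx], by simp [invRev_nil, hh], ?_⟩
            rw [hpr, syllables_prodL hred]
            simp
        · -- distinct indices
          have hred : ReducedL (syllables g ++ syllables h) := by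
            constructor
            · intro l hl
              rcases List.mem_append.mp hl with hl | hl
              · exact (reducedL_syllables g).1 l hl
              · exact (reducedL_syllables h).1 l hl
            · show List.IsChain _ (_ ++ _); rw [List.isChain_append]
              refine ⟨(reducedL_syllables g).2, (reducedL_syllables h).2, ?_⟩
              intro l hl z hz
              rw [hgx] at hl
              rw [List.getLast?_concat] at hl
              rw [hh] at hz
              simp only [Option.mem_def, Option.some.injEq, List.head?_cons] at hl hz
              rw [← hl, ← hz]
              exact fun hcon => hxy (hcon ▸ rfl)
          have hpr : g * h = prodL (syllables g ++ syllables h) := by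
            rw [prodL_append, prodL_syllables, prodL_syllables]
          refine ⟨syllables g, syllables h, [], [], [], [], by simp, by simp, by simp,
            by simp, by simp [invRev_nil, hh], ?_⟩
          rw [hpr, syllables_prodL hred]
          simp

end StructureThm

section Assembly

variable {α : Type*}

lemma single_symbol_triple (σ : α) (A B X : List α) (hX : X.length ≤ 1) :
    ∃ bad : Finset ℕ, bad.card ≤ 2 ∧ ((∀ x ∈ X, x ≠ σ) → bad.card ≤ 1) ∧
      ∀ k ∉ bad, scL σ k (A ++ X ++ B) = scL σ k A + scL σ k B := by
  cases X with
  | nil =>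
    obtain ⟨k0, hk0⟩ := scL_append_exc σ A B
    refine ⟨{k0}, by simp, fun _ => by simp, fun k hk => ?_⟩
    simp only [List.append_nil]
    exact hk0 k (by simpa using hk)
  | cons x X' =>
    cases X' with
    | nil =>
      by_cases hxσ : x = σ
      · obtain ⟨k1, hk1⟩ := scL_append_exc σ A ([x] ++ B)
        obtain ⟨k2, hk2⟩ := scL_append_exc σ [x] B
        refine ⟨{k1, k2}, (Finset.card_insert_le _ _).trans (by simp),
          fun hfalse => absurd hxσ (hfalse x (by simp)), fun k hk => ?_⟩
        simp only [Finset.mem_insert, Finset.mem_singleton, not_or] at hk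
        rw [List.append_assoc, hk1 k hk.1, hk2 k hk.2, scL_single]
        omega
      · obtain ⟨k1, hk1⟩ := scL_append_exc σ A ([x] ++ B)
        refine ⟨{k1}, by simp, fun _ => by simp, fun k hk => ?_⟩
        rw [List.append_assoc, hk1 k (by simpa using hk),
          show ([x] ++ B) = x :: B from rfl, scL_cons hxσ]
    | cons y X'' => simp at hX

lemma triple_t (s sb : α) (hssb : s ≠ sb) (A X B : List α) (hX : X.length ≤ 1) :
    ∃ bad : Finset ℕ, bad.card ≤ 3 ∧ ∀ k ∉ bad,
      (scL s k (A ++ X ++ B) : ℤ) - scL sb k (A ++ X ++ B)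
        = ((scL s k A : ℤ) - scL sb k A) + ((scL s k B : ℤ) - scL sb k B) := by
  obtain ⟨bs, hbs2, hbs1, hbs⟩ := single_symbol_triple s A B X hX
  obtain ⟨bb, hbb2, hbb1, hbb⟩ := single_symbol_triple sb A B X hX
  refine ⟨bs ∪ bb, ?_, fun k hk => ?_⟩
  · have hun := Finset.card_union_le bs bb
    have hcases : (∀ x ∈ X, x ≠ s) ∨ (∀ x ∈ X, x ≠ sb) := by
      by_contra hcon
      push_neg at hcon
      obtain ⟨⟨x1, hx1, hx1e⟩, ⟨x2, hx2, hx2e⟩⟩ := hcon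
      cases X with
      | nil => simp at hx1
      | cons x X' =>
        cases X' with
        | nil =>
          simp only [List.mem_singleton] at hx1 hx2
          exact hssb (by rw [← hx1e, hx1, ← hx2, hx2e])
        | cons y X'' => simp at hX
    rcases hcases with hc | hc
    · have := hbs1 hc; omega
    · have := hbb1 hc; omega
  · simp only [Finset.mem_union, not_or] at hk
    rw [hbs k hk.1, hbb k hk.2]
    push_cast
    ring

end Assembly

section InvRevCount

variable {ι : Type*} {M : ι → Type*} [∀ i, Group (M i)]

lemma segCount_eq_scL (s : Σ i, M i) (k : ℕ) (g : CoprodI M) :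
    segCount s k g = scL s k (syllables g) := by
  rw [segCount, scL, scF]
  congr!

attribute [local irreducible] scL scF

lemma scL_invRev (s : Σ i, M i) (k : ℕ) (L : List (Σ i, M i)) :
    scL s k (invRev L) = scL ⟨s.1, s.2⁻¹⟩ k L := by
  have h1 : invRev L = (L.map (fun p => (⟨p.1, p.2⁻¹⟩ : Σ i, M i))).reverse := rfl
  rw [h1, scL_reverse]
  exact scL_map_involutive (fun p => ⟨p.1, p.2⁻¹⟩) (fun p => ⟨p.1, p.2⁻¹⟩)
    (fun x => by cases x; simp) (fun y => by cases y; simp) s k L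

end InvRevCount

/-- `Δ₁` is a quasi-homomorphism: `Δ₁(gh) ≤ Δ₁(g) + Δ₁(h) + 9`. -/
theorem Delta1_quasihom {M : Bool → Type*} [∀ b, Group (M b)]
    [Nontrivial (M true)] [Nontrivial (M false)]
    (a : M true) (ha1 : a ≠ 1) (ha2 : a ≠ a⁻¹) (g h : CoprodI M) :
    Delta1 a (g * h) ≤ Delta1 a g + Delta1 a h + 9 := by
  have hssb : (⟨true, a⟩ : Σ b, M b) ≠ ⟨true, a⁻¹⟩ := by
    intro hcon
    apply ha2
    simpa using hcon
  obtain ⟨u, v, m, X, Y, Z, hX, hY, hZ, hgu, hhu, hghu⟩ := mul_structure g h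
  obtain ⟨badg, hcg, hbg⟩ := triple_t (⟨true, a⟩ : Σ b, M b) ⟨true, a⁻¹⟩ hssb u X m hX
  obtain ⟨badh, hch, hbh⟩ := triple_t (⟨true, a⟩ : Σ b, M b) ⟨true, a⁻¹⟩ hssb (invRev m) Y v hY
  obtain ⟨badgh, hcgh, hbgh⟩ := triple_t (⟨true, a⟩ : Σ b, M b) ⟨true, a⁻¹⟩ hssb u Z v hZ
  have hmr1 : ∀ k : ℕ, scL (⟨true, a⟩ : Σ b, M b) k (invRev m) = scL ⟨true, a⁻¹⟩ k m :=
    fun k => scL_invRev ⟨true, a⟩ k m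
  have hmr2 : ∀ k : ℕ, scL (⟨true, a⁻¹⟩ : Σ b, M b) k (invRev m) = scL ⟨true, a⟩ k m := by
    intro k
    rw [scL_invRev]
    have e : (⟨(⟨true, a⁻¹⟩ : Σ b, M b).1, (⟨true, a⁻¹⟩ : Σ b, M b).2⁻¹⟩ : Σ b, M b)
        = ⟨true, a⟩ := by simp
    rw [e]
  set bad := badg ∪ badh ∪ badgh with hbaddef
  have hbadcard : bad.card ≤ 9 := by
    rw [hbaddef]
    have h1 := Finset.card_union_le (badg ∪ badh) badgh
    have h2 := Finset.card_union_le badg badh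
    omega
  have key : ∀ k, k ∉ bad →
      ((scL (⟨true, a⟩ : Σ b, M b) k (syllables (g * h)) : ℤ)
        - scL ⟨true, a⁻¹⟩ k (syllables (g * h)))
      = ((scL (⟨true, a⟩ : Σ b, M b) k (syllables g) : ℤ) - scL ⟨true, a⁻¹⟩ k (syllables g))
        + ((scL (⟨true, a⟩ : Σ b, M b) k (syllables h) : ℤ)
          - scL ⟨true, a⁻¹⟩ k (syllables h)) := by
    intro k hk
    rw [hbaddef, Finset.mem_union, Finset.mem_union] at hk
    push_neg at hk
    obtain ⟨⟨hk1, hk2⟩, hk3⟩ := hk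
    rw [hgu, hhu, hghu, hbgh k hk3, hbg k hk1, hbh k hk2, hmr1, hmr2]
    ring
  set N := (syllables g).length + (syllables h).length + (syllables (g * h)).length + 1
    with hNdef
  have hsum : ∀ w : CoprodI M, (syllables w).length ≤ N → Delta1 a w
      = ∑ k ∈ Finset.range N, (if Odd ((scL (⟨true, a⟩ : Σ b, M b) k (syllables w) : ℤ)
          - scL ⟨true, a⁻¹⟩ k (syllables w)) then 1 else 0) := by
    intro w hw
    rw [Delta1]
    simp only [segCount_eq_scL]
    apply finsum_eq_sum_of_support_subset
    intro k hk
    simp only [Function.mem_support] at hk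
    simp only [Finset.coe_range, Set.mem_Iio]
    by_contra hkN
    push_neg at hkN
    apply hk
    rw [scL_eq_zero (show (syllables w).length ≤ 2*k+2 by omega),
      scL_eq_zero (show (syllables w).length ≤ 2*k+2 by omega)]
    norm_num
  rw [hsum (g * h) (by omega), hsum g (by omega), hsum h (by omega)]
  have hpoint : ∀ k ∈ Finset.range N,
      (if Odd ((scL (⟨true, a⟩ : Σ b, M b) k (syllables (g * h)) : ℤ)
          - scL ⟨true, a⁻¹⟩ k (syllables (g * h))) then 1 else 0)
      ≤ ((if Odd ((scL (⟨true, a⟩ : Σ b, M b) k (syllables g) : ℤ)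
          - scL ⟨true, a⁻¹⟩ k (syllables g)) then 1 else 0)
        + (if Odd ((scL (⟨true, a⟩ : Σ b, M b) k (syllables h) : ℤ)
          - scL ⟨true, a⁻¹⟩ k (syllables h)) then 1 else 0))
        + (if k ∈ bad then 1 else 0) := by
    intro k _
    by_cases hkb : k ∈ bad
    · rw [if_pos hkb]
      split_ifs <;> omega
    · rw [if_neg hkb]
      by_cases ho : Odd ((scL (⟨true, a⟩ : Σ b, M b) k (syllables (g * h)) : ℤ)
          - scL ⟨true, a⁻¹⟩ k (syllables (g * h)))
      · rw [if_pos ho]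
        rw [key k hkb] at ho
        have hd : Odd ((scL (⟨true, a⟩ : Σ b, M b) k (syllables g) : ℤ)
              - scL ⟨true, a⁻¹⟩ k (syllables g))
            ∨ Odd ((scL (⟨true, a⟩ : Σ b, M b) k (syllables h) : ℤ)
              - scL ⟨true, a⁻¹⟩ k (syllables h)) := by
          by_contra hcon
          push_neg at hcon
          obtain ⟨h1, h2⟩ := hcon
          rw [Int.not_odd_iff_even] at h1 h2
          exact ((Int.not_odd_iff_even.mpr (h1.add h2))) ho
        rcases hd with hx | hx
        · rw [if_pos hx]
          omega
        · rw [if_pos hx]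
          split_ifs <;> omega
      · rw [if_neg ho]
        exact Nat.zero_le _
  have H1 := Finset.sum_le_sum hpoint
  rw [Finset.sum_add_distrib, Finset.sum_add_distrib] at H1
  have H2 : (∑ k ∈ Finset.range N, (if k ∈ bad then (1:ℕ) else 0)) ≤ 9 := by
    rw [Finset.sum_ite_mem]
    simp only [Finset.sum_const, smul_eq_mul, mul_one]
    exact le_trans (Finset.card_le_card Finset.inter_subset_right) hbadcard
  omega
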